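/- Fix l, h with h ≤ l, and l-bit words k*, k with k ≠ k* and HD(k*,k) = x. Then the number of l-bit words i for which exactly one of HD(i,k*) = h and HD(i,k) = h holds equals 2·C(l,h) if x is odd, and equals 2·(C(l,h) − C(x,x/2)·C(l−x,h−x/2)) if x is even, where binomial coefficients C(a,b) are 0 when b < 0 or b > a. (In the SFLL-HD model this is the number of input patterns on which key k produces an incorrect output.) -/

import Mathlib

open Finset

/-- Hamming distance between `l`-bit words. -/
def HD {l : ℕ} (a b : Fin l → Bool) : ℕ :=
  (Finset.univ.filter (fun j => a j ≠ b j)).card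

namespace SFLLAux

variable {l : ℕ}

def toSet (c i : Fin l → Bool) : Finset (Fin l) :=
  univ.filter (fun j => i j ≠ c j)

def fromSet (c : Fin l → Bool) (s : Finset (Fin l)) : Fin l → Bool :=
  fun j => if j ∈ s then !(c j) else c j

lemma toSet_fromSet (c : Fin l → Bool) (s : Finset (Fin l)) : toSet c (fromSet c s) = s := by
  ext j
  simp only [toSet, fromSet, mem_filter, mem_univ, true_and]
  by_cases hj : j ∈ s <;> simp [hj]

lemma fromSet_toSet (c i : Fin l → Bool) : fromSet c (toSet c i) = i := by
  funext j
  simp only [toSet, fromSet, mem_filter, mem_univ, true_and]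
  cases hij : i j <;> cases hcj : c j <;> simp [hij, hcj]

lemma HD_eq_card (c i : Fin l → Bool) : HD i c = (toSet c i).card := rfl

lemma HD_eq_symmDiff (c i k : Fin l → Bool) :
    HD i k = (symmDiff (toSet c i) (toSet c k)).card := by
  unfold HD
  congr 1
  ext j
  simp only [toSet, Finset.mem_symmDiff, mem_filter, mem_univ, true_and]
  cases i j <;> cases k j <;> cases c j <;> simp

lemma card_transfer (c : Fin l → Bool) (P : Finset (Fin l) → Prop) [DecidablePred P] :
    (univ.filter fun i : Fin l → Bool => P (toSet c i)).card = (univ.filter P).card := by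
  refine Finset.card_nbij' (toSet c) (fromSet c) ?_ ?_ ?_ ?_
  · intro i hi; simp only [Finset.mem_coe, mem_filter, mem_univ, true_and] at hi ⊢; exact hi
  · intro s hs; simp only [Finset.mem_coe, mem_filter, mem_univ, true_and] at hs ⊢
    rw [toSet_fromSet]; exact hs
  · intro i _; exact fromSet_toSet c i
  · intro s _; exact toSet_fromSet c s

lemma count_card_eq (h : ℕ) :
    (univ.filter fun D : Finset (Fin l) => D.card = h).card = l.choose h := by
  have : (univ.filter fun D : Finset (Fin l) => D.card = h)
      = Finset.powersetCard h (univ : Finset (Fin l)) := by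
    rw [Finset.powersetCard_eq_filter, Finset.powerset_univ]
  rw [this, Finset.card_powersetCard, card_univ, Fintype.card_fin]

lemma count_inter (S : Finset (Fin l)) (h m : ℕ) (hm : m ≤ h) :
    (univ.filter fun D : Finset (Fin l) => D.card = h ∧ (D ∩ S).card = m).card
      = S.card.choose m * (l - S.card).choose (h - m) := by
  have hcompl : Sᶜ.card = l - S.card := by
    rw [Finset.card_compl, Fintype.card_fin]
  rw [← hcompl, ← Finset.card_powersetCard, ← Finset.card_powersetCard,
    ← Finset.card_product]
  refine Finset.card_nbij' (fun D => (D ∩ S, D \ S)) (fun p => p.1 ∪ p.2) ?_ ?_ ?_ ?_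
  · intro D hD
    simp only [Finset.mem_coe, mem_filter, mem_univ, true_and] at hD
    obtain ⟨hDh, hDm⟩ := hD
    simp only [Finset.mem_coe, Finset.mem_product, Finset.mem_powersetCard]
    refine ⟨⟨Finset.inter_subset_right, hDm⟩, fun j hj => ?_, ?_⟩
    · simp only [Finset.mem_sdiff] at hj
      simpa using hj.2
    · have := Finset.card_inter_add_card_sdiff D S
      omega
  · intro p hp
    simp only [Finset.mem_coe, Finset.mem_product, Finset.mem_powersetCard] at hp
    obtain ⟨⟨h1s, h1c⟩, h2s, h2c⟩ := hp
    have hdisj : Disjoint p.1 p.2 := by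
      refine Finset.disjoint_left.2 fun a ha1 ha2 => ?_
      have := h2s ha2
      simp only [Finset.mem_compl] at this
      exact this (h1s ha1)
    have hint : (p.1 ∪ p.2) ∩ S = p.1 := by
      ext a
      simp only [Finset.mem_inter, Finset.mem_union]
      constructor
      · rintro ⟨h1 | h2, hS⟩
        · exact h1
        · exact absurd hS (by simpa using h2s h2)
      · intro h1; exact ⟨Or.inl h1, h1s h1⟩
    simp only [Finset.mem_coe, mem_filter, mem_univ, true_and]
    constructor
    · rw [Finset.card_union_of_disjoint hdisj, h1c, h2c]; omega
    · rw [hint, h1c]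
  · intro D hD
    simp only
    rw [Finset.union_comm, Finset.sdiff_union_inter]
  · intro p hp
    simp only [Finset.mem_coe, Finset.mem_product, Finset.mem_powersetCard] at hp
    obtain ⟨⟨h1s, h1c⟩, h2s, h2c⟩ := hp
    have hint : (p.1 ∪ p.2) ∩ S = p.1 := by
      ext a
      simp only [Finset.mem_inter, Finset.mem_union]
      constructor
      · rintro ⟨h1 | h2, hS⟩
        · exact h1
        · exact absurd hS (by simpa using h2s h2)
      · intro h1; exact ⟨Or.inl h1, h1s h1⟩
    have hsd : (p.1 ∪ p.2) \ S = p.2 := by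
      ext a
      simp only [Finset.mem_sdiff, Finset.mem_union]
      constructor
      · rintro ⟨h1 | h2, hS⟩
        · exact absurd (h1s h1) hS
        · exact h2
      · intro h2
        exact ⟨Or.inr h2, by simpa using h2s h2⟩
    simp only [Prod.ext_iff]
    exact ⟨hint, hsd⟩

lemma xor_card (s : Finset (Fin l → Bool)) (p q : (Fin l → Bool) → Prop)
    [DecidablePred p] [DecidablePred q] :
    (s.filter fun a => Xor (p a) (q a)).card + 2 * (s.filter fun a => p a ∧ q a).card
      = (s.filter p).card + (s.filter q).card := by
  have h1 : (s.filter p).card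
      = (s.filter fun a => p a ∧ q a).card + (s.filter fun a => p a ∧ ¬ q a).card := by
    rw [← Finset.filter_filter, ← Finset.filter_filter,
      Finset.card_filter_add_card_filter_not (p := q)]
  have h2 : (s.filter q).card
      = (s.filter fun a => p a ∧ q a).card + (s.filter fun a => q a ∧ ¬ p a).card := by
    rw [← Finset.filter_filter, ← Finset.filter_filter (fun a => q a),
      Finset.filter_comm,
      Finset.card_filter_add_card_filter_not (p := p)]
  have h3 : (s.filter fun a => Xor (p a) (q a))
      = (s.filter fun a => p a ∧ ¬ q a) ∪ (s.filter fun a => q a ∧ ¬ p a) := by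
    ext a
    simp only [mem_filter, Finset.mem_union]; simp only [Xor]
    tauto
  have hdisj : Disjoint (s.filter fun a => p a ∧ ¬ q a) (s.filter fun a => q a ∧ ¬ p a) := by
    refine Finset.disjoint_left.2 fun a ha hb => ?_
    simp only [mem_filter] at ha hb
    tauto
  rw [h3, Finset.card_union_of_disjoint hdisj]
  omega

end SFLLAux

open SFLLAux in
/-- SFLL-HD per-key error count: for `k ≠ k*` with `HD(k*,k) = x`, the number of
words `i` on which exactly one of `HD(i,k*) = h`, `HD(i,k) = h` holds is
`2·C(l,h)` if `x` is odd and `2·(C(l,h) − C(x,x/2)·C(l−x,h−x/2))` if `x` is even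
(binomial coefficients being `0` for negative lower index, via the `if` guard). -/
theorem sfll_hd_per_key_error_count {l : ℕ} (h : ℕ) (hh : h ≤ l)
    (k kstar : Fin l → Bool) (hne : k ≠ kstar) (x : ℕ) (hx : HD kstar k = x) :
    (Finset.univ.filter (fun i : Fin l → Bool =>
        Xor (HD i kstar = h) (HD i k = h))).card
      = if Odd x then 2 * l.choose h
        else 2 * (l.choose h -
          (if x / 2 ≤ h then x.choose (x / 2) * (l - x).choose (h - x / 2) else 0)) := by
  classical
  set c := kstar
  set S : Finset (Fin l) := toSet c k with hS
  have hScard : S.card = x := by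
    rw [hS, ← HD_eq_card c k]
    have : HD k c = HD c k := by
      unfold HD; congr 1; ext j; simp [ne_comm]
    rw [this]; exact hx
  -- counts of the two single events
  have hA : (univ.filter fun i : Fin l → Bool => HD i c = h).card = l.choose h := by
    have := card_transfer c (fun D => D.card = h)
    simp only [← HD_eq_card] at this
    exact this.trans (count_card_eq h)
  have hB : (univ.filter fun i : Fin l → Bool => HD i k = h).card = l.choose h := by
    have := card_transfer k (fun D => D.card = h)
    simp only [← HD_eq_card] at this
    exact this.trans (count_card_eq h)
  -- the intersection
  have hIeq : (univ.filter fun i : Fin l → Bool => HD i c = h ∧ HD i k = h).card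
      = (univ.filter fun D : Finset (Fin l) => D.card = h ∧ (symmDiff D S).card = h).card := by
    have := card_transfer c (fun D => D.card = h ∧ (symmDiff D S).card = h)
    rw [← this]
    congr 1
    apply Finset.filter_congr
    intro i _
    rw [HD_eq_card c i, HD_eq_symmDiff c i k, ← hS]
  -- symmDiff condition rephrased
  have hcond : ∀ D : Finset (Fin l), D.card = h →
      ((symmDiff D S).card = h ↔ 2 * (D ∩ S).card = x) := by
    intro D hD
    have e1 : (symmDiff D S) = (D \ S) ∪ (S \ D) := by
      ext a; simp [Finset.mem_symmDiff, Finset.mem_sdiff, Finset.mem_union]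
    have hdisj : Disjoint (D \ S) (S \ D) := by
      refine Finset.disjoint_left.2 fun a ha hb => ?_
      simp only [Finset.mem_sdiff] at ha hb
      exact ha.2 hb.1
    have e2 : (symmDiff D S).card = (D \ S).card + (S \ D).card := by
      rw [e1, Finset.card_union_of_disjoint hdisj]
    have e3 := Finset.card_inter_add_card_sdiff D S
    have e4 := Finset.card_inter_add_card_sdiff S D
    have e5 : (S ∩ D).card = (D ∩ S).card := by rw [Finset.inter_comm]
    omega
  have hIfilter : (univ.filter fun D : Finset (Fin l) => D.card = h ∧ (symmDiff D S).card = h)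
      = (univ.filter fun D : Finset (Fin l) => D.card = h ∧ 2 * (D ∩ S).card = x) := by
    apply Finset.filter_congr
    intro D _
    constructor
    · rintro ⟨h1, h2⟩; exact ⟨h1, (hcond D h1).1 h2⟩
    · rintro ⟨h1, h2⟩; exact ⟨h1, (hcond D h1).2 h2⟩
  -- value of the intersection count
  have hIval : (univ.filter fun i : Fin l → Bool => HD i c = h ∧ HD i k = h).card
      = if Odd x then 0 else (if x / 2 ≤ h then x.choose (x / 2) * (l - x).choose (h - x / 2) else 0) := by
    rw [hIeq, hIfilter]
    by_cases hodd : Odd x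
    · simp only [hodd, if_true]
      rw [Finset.card_eq_zero, Finset.filter_eq_empty_iff]
      intro D _
      rintro ⟨_, h2⟩
      exact (Nat.not_even_iff_odd.2 hodd) ⟨(D ∩ S).card, by omega⟩
    · simp only [hodd, if_false]
      have heven : 2 * (x / 2) = x := by
        obtain ⟨y, hy⟩ := Nat.not_odd_iff_even.1 hodd
        omega
      by_cases hle : x / 2 ≤ h
      · simp only [hle, if_true]
        have := count_inter S h (x / 2) hle
        rw [hScard] at this
        rw [← this]
        congr 1
        apply Finset.filter_congr
        intro D _
        constructor
        · rintro ⟨h1, h2⟩; exact ⟨h1, by omega⟩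
        · rintro ⟨h1, h2⟩; exact ⟨h1, by omega⟩
      · simp only [hle, if_false]
        rw [Finset.card_eq_zero, Finset.filter_eq_empty_iff]
        intro D _
        rintro ⟨h1, h2⟩
        have : (D ∩ S).card ≤ D.card := Finset.card_le_card Finset.inter_subset_left
        omega
  -- intersection is at most C(l,h)
  have hIle : (univ.filter fun i : Fin l → Bool => HD i c = h ∧ HD i k = h).card
      ≤ l.choose h := by
    rw [← hA]
    apply Finset.card_le_card
    intro a ha
    simp only [Finset.mem_filter] at ha ⊢
    exact ⟨ha.1, ha.2.1⟩
  have hmain := xor_card (univ : Finset (Fin l → Bool))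
    (fun i => HD i c = h) (fun i => HD i k = h)
  rw [hA, hB, hIval] at hmain
  rw [hIval] at hIle
  by_cases hodd : Odd x
  · simp only [hodd, if_true] at hmain hIle ⊢
    omega
  · simp only [hodd, if_false] at hmain hIle ⊢
    omega
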